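/- (Subsonic two-sided boundary control via block Kreiss symmetrizer.) Let Aˡ, Aʳ be 2×2 real matrices each with one positive eigenvalue λ₊^{l,r} and one negative eigenvalue -λ₋^{l,r}, with eigenprojectors π₊^{l,r}, π₋^{l,r}. Let 𝐀 = diag(-Aˡ, Aʳ) (4×4), and for M > 0 set 𝐒 = (π₋ˡ)ᵀπ₋ˡ ⊕ 0 + 0 ⊕ (π₊ʳ)ᵀπ₊ʳ + M[(π₊ˡ)ᵀπ₊ˡ ⊕ 0 + 0 ⊕ (π₋ʳ)ᵀπ₋ʳ] (block diagonal). Let 𝐍 be a 2×4 real matrix such that the 2×2 Lopatinskiĭ matrix 𝐋 = 𝐍·[eˡ₋ ⊕ 0, 0 ⊕ eʳ₊] is invertible, where e₋ˡ, e₊ʳ are the corresponding unit eigenvectors. Then 𝐒𝐀 is symmetric, and there exists M₀ such that for all M ≥ M₀ there are α₁, β₁ > 0 with vᵀ𝐒𝐀v ≤ -α₁|v|² + β₁|𝐍v|² for all v ∈ ℝ⁴. -/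

import Mathlib

open Matrix

lemma mv_ext {B C : Matrix (Fin 2) (Fin 2) ℝ} (h : ∀ w, B *ᵥ w = C *ᵥ w) : B = C := by
  ext i j
  have := congrFun (h (Pi.single j 1)) i
  simpa [Matrix.mulVec_single] using this

lemma side (A πp πm : Matrix (Fin 2) (Fin 2) ℝ) (lp lm : ℝ) (hlp : 0 < lp) (hlm : 0 < lm)
    (ep em : Fin 2 → ℝ) (hep : ep ⬝ᵥ ep = 1) (hem : em ⬝ᵥ em = 1)
    (heigp : A *ᵥ ep = lp • ep) (heigm : A *ᵥ em = (-lm) • em)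
    (hπp : πp = (lp + lm)⁻¹ • (A + lm • (1 : Matrix (Fin 2) (Fin 2) ℝ)))
    (hπm : πm = (lp + lm)⁻¹ • (lp • (1 : Matrix (Fin 2) (Fin 2) ℝ) - A)) :
    πm * A = (-lm) • πm ∧ πp * A = lp • πp ∧
      (∀ w : Fin 2 → ℝ, ∃ a b : ℝ, w = a • ep + b • em ∧ πp *ᵥ w = a • ep ∧ πm *ᵥ w = b • em) := by
  have hs : lp + lm ≠ 0 := by positivity
  have hpep : πp *ᵥ ep = ep := by
    rw [hπp, smul_mulVec, add_mulVec, heigp, smul_mulVec, one_mulVec,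
      ← add_smul, smul_smul, inv_mul_cancel₀ hs, one_smul]
  have hpem : πp *ᵥ em = 0 := by
    rw [hπp, smul_mulVec, add_mulVec, heigm, smul_mulVec, one_mulVec,
      ← add_smul]
    simp
  have hmem : πm *ᵥ em = em := by
    rw [hπm, smul_mulVec, sub_mulVec, heigm, smul_mulVec, one_mulVec,
      ← sub_smul, smul_smul]
    rw [show lp - -lm = lp + lm by ring, inv_mul_cancel₀ hs, one_smul]
  have hmep : πm *ᵥ ep = 0 := by
    rw [hπm, smul_mulVec, sub_mulVec, heigp, smul_mulVec, one_mulVec,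
      ← sub_smul]
    simp
  have hep0 : ep ≠ 0 := by
    intro h; rw [h] at hep; simp at hep
  have hem0 : em ≠ 0 := by
    intro h; rw [h] at hem; simp at hem
  have hind : LinearIndependent ℝ ![ep, em] := by
    rw [linearIndependent_fin2]
    refine ⟨hem0, fun a ha => ?_⟩
    apply hep0
    have := congrArg (πp *ᵥ ·) ha
    simpa [mulVec_smul, hpem, hpep] using this.symm
  have hcard : Fintype.card (Fin 2) = Module.finrank ℝ (Fin 2 → ℝ) := by simp
  let b := basisOfLinearIndependentOfCardEqFinrank hind hcard
  have hbcoe : ⇑b = ![ep, em] := coe_basisOfLinearIndependentOfCardEqFinrank hind hcard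
  have hdecomp : ∀ w : Fin 2 → ℝ, ∃ a c : ℝ, w = a • ep + c • em := by
    intro w
    refine ⟨b.repr w 0, b.repr w 1, ?_⟩
    have := b.sum_repr w
    rw [Fin.sum_univ_two, hbcoe] at this
    simpa using this.symm
  have key : ∀ w : Fin 2 → ℝ, ∃ a c : ℝ, w = a • ep + c • em ∧ πp *ᵥ w = a • ep ∧
      πm *ᵥ w = c • em := by
    intro w
    obtain ⟨a, c, hw⟩ := hdecomp w
    exact ⟨a, c, hw, by rw [hw, mulVec_add, mulVec_smul, mulVec_smul, hpep, hpem,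
      smul_zero, add_zero], by rw [hw, mulVec_add, mulVec_smul, mulVec_smul, hmep, hmem,
      smul_zero, zero_add]⟩
  refine ⟨?_, ?_, key⟩
  · apply mv_ext; intro w
    obtain ⟨a, c, hw, _, hmw⟩ := key w
    simp only [← mulVec_mulVec, hw, smul_mulVec, mulVec_add, mulVec_smul,
      heigp, heigm, hmep, hmem, smul_zero, zero_add, add_zero, smul_smul]
  · apply mv_ext; intro w
    obtain ⟨a, c, hw, hpw, _⟩ := key w
    simp only [← mulVec_mulVec, hw, smul_mulVec, mulVec_add, mulVec_smul,
      heigp, heigm, hpep, hpem, smul_zero, zero_add, add_zero, smul_smul]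


lemma aux_frob (k00 k01 k10 k11 w0 w1 : ℝ) :
    (k00 * w0 + k01 * w1) ^ 2 + (k10 * w0 + k11 * w1) ^ 2
      ≤ (k00 ^ 2 + k01 ^ 2 + k10 ^ 2 + k11 ^ 2) * (w0 ^ 2 + w1 ^ 2) := by
  nlinarith [sq_nonneg (k00 * w1 - k01 * w0), sq_nonneg (k10 * w1 - k11 * w0)]

lemma aux_three (a b c : ℝ) : (a - b - c) ^ 2 ≤ 3 * a ^ 2 + 3 * b ^ 2 + 3 * c ^ 2 := by
  nlinarith [sq_nonneg (a + b), sq_nonneg (a + c), sq_nonneg (b - c)]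

lemma aux_cauchy (x0 x1 y0 y1 : ℝ) (hx : x0 * x0 + x1 * x1 = 1)
    (hy : y0 * y0 + y1 * y1 = 1) : (x0 * y0 + x1 * y1) ^ 2 ≤ 1 := by
  nlinarith [sq_nonneg (x0 * y1 - x1 * y0)]

lemma aux_cs2 (a b d : ℝ) (hd : d ^ 2 ≤ 1) : 2 * a * b * d ≤ a ^ 2 + b ^ 2 := by
  nlinarith [sq_nonneg (a * d - b), mul_nonneg (sub_nonneg.2 hd) (sq_nonneg a)]

lemma aux_final (lml lpr lpl lmr M m K0 CK Epl Emr cml cpr cpl cmr dl dr n0 n1 : ℝ)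
    (hCK : 0 ≤ CK) (hEpl : 0 ≤ Epl) (hEmr : 0 ≤ Emr)
    (hK0 : 1 ≤ K0) (hlml : lml ≤ K0) (hlpr : lpr ≤ K0)
    (hm : m ≤ lpl) (hm2 : m ≤ lmr) (hM0 : 0 ≤ M)
    (hMm : K0 * (2 * (3 * CK * Epl + 3 * CK * Emr) + 1) ≤ M * m)
    (h2 : cml ^ 2 + cpr ^ 2 ≤ 3 * CK * (n0 ^ 2 + n1 ^ 2)
      + 3 * CK * Epl * cpl ^ 2 + 3 * CK * Emr * cmr ^ 2)
    (P1 : 2 * cpl * cml * dl ≤ cpl ^ 2 + cml ^ 2)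
    (P2 : 2 * cpr * cmr * dr ≤ cpr ^ 2 + cmr ^ 2) :
    lml * cml ^ 2 - M * lpl * cpl ^ 2 + (lpr * cpr ^ 2 - M * lmr * cmr ^ 2) ≤
      -(K0 / 2) * (cpl ^ 2 + 2 * cpl * cml * dl + cml ^ 2
        + (cpr ^ 2 + 2 * cpr * cmr * dr + cmr ^ 2))
      + (6 * K0 * CK + 1) * (n0 ^ 2 + n1 ^ 2) := by
  have hK0p : (0:ℝ) < K0 := lt_of_lt_of_le one_pos hK0
  have A1 : 0 ≤ (K0 - lml) * cml ^ 2 := mul_nonneg (by linarith) (sq_nonneg _)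
  have A2 : 0 ≤ (K0 - lpr) * cpr ^ 2 := mul_nonneg (by linarith) (sq_nonneg _)
  have A3 : 0 ≤ M * (lpl - m) * cpl ^ 2 :=
    mul_nonneg (mul_nonneg hM0 (by linarith)) (sq_nonneg _)
  have A4 : 0 ≤ M * (lmr - m) * cmr ^ 2 :=
    mul_nonneg (mul_nonneg hM0 (by linarith)) (sq_nonneg _)
  have F1 : 2 * K0 * (cml ^ 2 + cpr ^ 2) ≤ 2 * K0 * (3 * CK * (n0 ^ 2 + n1 ^ 2)
      + 3 * CK * Epl * cpl ^ 2 + 3 * CK * Emr * cmr ^ 2) :=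
    mul_le_mul_of_nonneg_left h2 (by linarith)
  have F2 : K0 * (2 * (3 * CK * Epl + 3 * CK * Emr) + 1) * (cpl ^ 2 + cmr ^ 2)
      ≤ M * m * (cpl ^ 2 + cmr ^ 2) :=
    mul_le_mul_of_nonneg_right hMm (by positivity)
  have G1 : 0 ≤ 2 * K0 * (3 * (CK * Emr)) * cpl ^ 2 :=
    mul_nonneg (mul_nonneg (by linarith) (by nlinarith)) (sq_nonneg _)
  have G2 : 0 ≤ 2 * K0 * (3 * (CK * Epl)) * cmr ^ 2 :=
    mul_nonneg (mul_nonneg (by linarith) (by nlinarith)) (sq_nonneg _)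
  have P1' : K0 * (2 * cpl * cml * dl) ≤ K0 * (cpl ^ 2 + cml ^ 2) :=
    mul_le_mul_of_nonneg_left P1 hK0p.le
  have P2' : K0 * (2 * cpr * cmr * dr) ≤ K0 * (cpr ^ 2 + cmr ^ 2) :=
    mul_le_mul_of_nonneg_left P2 hK0p.le
  have N0 : (0:ℝ) ≤ n0 ^ 2 + n1 ^ 2 := by positivity
  linarith [A1, A2, A3, A4, F1, F2, G1, G2, P1', P2', N0]

theorem stmt18 (Al Ar πpl πml πpr πmr : Matrix (Fin 2) (Fin 2) ℝ)
    (lpl lml lpr lmr : ℝ)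
    (hlpl : 0 < lpl) (hlml : 0 < lml) (hlpr : 0 < lpr) (hlmr : 0 < lmr)
    (epl eml epr emr : Fin 2 → ℝ)
    (hepl : epl ⬝ᵥ epl = 1) (heml : eml ⬝ᵥ eml = 1)
    (hepr : epr ⬝ᵥ epr = 1) (hemr : emr ⬝ᵥ emr = 1)
    (heigpl : Al *ᵥ epl = lpl • epl) (heigml : Al *ᵥ eml = (-lml) • eml)
    (heigpr : Ar *ᵥ epr = lpr • epr) (heigmr : Ar *ᵥ emr = (-lmr) • emr)
    (hπpl : πpl = (lpl + lml)⁻¹ • (Al + lml • (1 : Matrix (Fin 2) (Fin 2) ℝ)))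
    (hπml : πml = (lpl + lml)⁻¹ • (lpl • (1 : Matrix (Fin 2) (Fin 2) ℝ) - Al))
    (hπpr : πpr = (lpr + lmr)⁻¹ • (Ar + lmr • (1 : Matrix (Fin 2) (Fin 2) ℝ)))
    (hπmr : πmr = (lpr + lmr)⁻¹ • (lpr • (1 : Matrix (Fin 2) (Fin 2) ℝ) - Ar))
    (N : Matrix (Fin 2) (Fin 2 ⊕ Fin 2) ℝ)
    (hL : IsUnit (!![(N *ᵥ Sum.elim eml fun _ => (0:ℝ)) 0,
        (N *ᵥ Sum.elim (fun _ => (0:ℝ)) epr) 0;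
        (N *ᵥ Sum.elim eml fun _ => (0:ℝ)) 1,
        (N *ᵥ Sum.elim (fun _ => (0:ℝ)) epr) 1] : Matrix (Fin 2) (Fin 2) ℝ).det) :
    (∀ M : ℝ,
      (Matrix.fromBlocks (πmlᵀ * πml + M • (πplᵀ * πpl)) 0 0
          (πprᵀ * πpr + M • (πmrᵀ * πmr)) *
        Matrix.fromBlocks (-Al) 0 0 Ar).IsSymm) ∧
    ∃ M₀ : ℝ, ∀ M : ℝ, M₀ ≤ M → ∃ α₁ > (0:ℝ), ∃ β₁ > (0:ℝ),
      ∀ v : Fin 2 ⊕ Fin 2 → ℝ,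
        v ⬝ᵥ ((Matrix.fromBlocks (πmlᵀ * πml + M • (πplᵀ * πpl)) 0 0
              (πprᵀ * πpr + M • (πmrᵀ * πmr)) *
            Matrix.fromBlocks (-Al) 0 0 Ar) *ᵥ v) ≤
          -α₁ * (v ⬝ᵥ v) + β₁ * ((N *ᵥ v) ⬝ᵥ (N *ᵥ v)) := by
  obtain ⟨hmlA, hplA, decompL⟩ :=
    side Al πpl πml lpl lml hlpl hlml epl eml hepl heml heigpl heigml hπpl hπml
  obtain ⟨hmrA, hprA, decompR⟩ :=
    side Ar πpr πmr lpr lmr hlpr hlmr epr emr hepr hemr heigpr heigmr hπpr hπmr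
  have hS1 : ∀ M : ℝ, (πmlᵀ * πml + M • (πplᵀ * πpl)) * (-Al)
      = lml • (πmlᵀ * πml) - (M * lpl) • (πplᵀ * πpl) := by
    intro M
    rw [add_mul, smul_mul_assoc, mul_assoc, mul_assoc, mul_neg, mul_neg, mul_neg, hmlA, hplA,
      Matrix.mul_smul, mul_neg, Matrix.mul_smul]
    module
  have hS2 : ∀ M : ℝ, (πprᵀ * πpr + M • (πmrᵀ * πmr)) * Ar
      = lpr • (πprᵀ * πpr) - (M * lmr) • (πmrᵀ * πmr) := by
    intro M
    rw [add_mul, smul_mul_assoc, mul_assoc, mul_assoc, hprA, hmrA,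
      Matrix.mul_smul, Matrix.mul_smul]
    module
  have hblock : ∀ M : ℝ,
      Matrix.fromBlocks (πmlᵀ * πml + M • (πplᵀ * πpl)) 0 0
          (πprᵀ * πpr + M • (πmrᵀ * πmr)) * Matrix.fromBlocks (-Al) 0 0 Ar
        = Matrix.fromBlocks (lml • (πmlᵀ * πml) - (M * lpl) • (πplᵀ * πpl)) 0 0
            (lpr • (πprᵀ * πpr) - (M * lmr) • (πmrᵀ * πmr)) := by
    intro M
    rw [Matrix.fromBlocks_multiply]
    simp [hS1 M, hS2 M]
  refine ⟨?_, ?_⟩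
  · intro M
    rw [hblock M, Matrix.IsSymm, fromBlocks_transpose]
    simp [Matrix.transpose_sub, Matrix.transpose_smul, Matrix.transpose_mul]
  set npl := N *ᵥ Sum.elim epl (fun _ => (0:ℝ)) with hnpldef
  set nml := N *ᵥ Sum.elim eml (fun _ => (0:ℝ)) with hnmldef
  set npr := N *ᵥ Sum.elim (fun _ => (0:ℝ)) epr with hnprdef
  set nmr := N *ᵥ Sum.elim (fun _ => (0:ℝ)) emr with hnmrdef
  set L : Matrix (Fin 2) (Fin 2) ℝ := !![nml 0, npr 0; nml 1, npr 1] with hLdef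
  set K := L⁻¹ with hKdef
  have hKL : K * L = 1 := nonsing_inv_mul L hL
  set CK := K 0 0 ^ 2 + K 0 1 ^ 2 + K 1 0 ^ 2 + K 1 1 ^ 2 with hCKdef
  have hCK : 0 ≤ CK := by rw [hCKdef]; positivity
  set Epl := npl 0 ^ 2 + npl 1 ^ 2 with hEpldef
  have hEpl : 0 ≤ Epl := by rw [hEpldef]; positivity
  set Emr := nmr 0 ^ 2 + nmr 1 ^ 2 with hEmrdef
  have hEmr : 0 ≤ Emr := by rw [hEmrdef]; positivity
  have hCKEpl : 0 ≤ CK * Epl := mul_nonneg hCK hEpl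
  have hCKEmr : 0 ≤ CK * Emr := mul_nonneg hCK hEmr
  set K0 := max (max lml lpr) 1 with hK0def
  have hK0 : (1:ℝ) ≤ K0 := le_max_right _ _
  have hK0p : (0:ℝ) < K0 := lt_of_lt_of_le one_pos hK0
  have hlmlK0 : lml ≤ K0 := le_trans (le_max_left _ _) (le_max_left _ _)
  have hlprK0 : lpr ≤ K0 := le_trans (le_max_right _ _) (le_max_left _ _)
  set m := min lpl lmr with hmdef
  have hm : 0 < m := lt_min hlpl hlmr
  have hmlpl : m ≤ lpl := min_le_left _ _
  have hmlmr : m ≤ lmr := min_le_right _ _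
  refine ⟨K0 * (2 * (3 * CK * Epl + 3 * CK * Emr) + 1) / m, ?_⟩
  intro M hM
  have hMm : K0 * (2 * (3 * CK * Epl + 3 * CK * Emr) + 1) ≤ M * m := (div_le_iff₀ hm).mp hM
  have hX : 0 < 2 * (3 * CK * Epl + 3 * CK * Emr) + 1 := by linarith [hCKEpl, hCKEmr]
  have hM0 : 0 ≤ M := le_trans (div_pos (mul_pos hK0p hX) hm).le hM
  refine ⟨K0 / 2, by linarith, 6 * K0 * CK + 1,
    by linarith [mul_nonneg hK0p.le hCK], ?_⟩
  intro v
  set vl := fun i => v (Sum.inl i) with hvldef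
  set vr := fun i => v (Sum.inr i) with hvrdef
  have hv : v = Sum.elim vl vr := by funext x; cases x <;> rfl
  obtain ⟨cpl, cml, hvl, hpvl, hmvl⟩ := decompL vl
  obtain ⟨cpr, cmr, hvr, hpvr, hmvr⟩ := decompR vr
  have hterm : ∀ (X : Matrix (Fin 2) (Fin 2) ℝ) (u e : Fin 2 → ℝ) (c : ℝ),
      X *ᵥ u = c • e → e ⬝ᵥ e = 1 → u ⬝ᵥ ((Xᵀ * X) *ᵥ u) = c ^ 2 := by
    intro X u e c h he
    rw [← mulVec_mulVec, dotProduct_mulVec, vecMul_transpose, h, smul_dotProduct,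
      dotProduct_smul, he]
    simp [smul_eq_mul]; ring
  have hq : v ⬝ᵥ ((Matrix.fromBlocks (πmlᵀ * πml + M • (πplᵀ * πpl)) 0 0
          (πprᵀ * πpr + M • (πmrᵀ * πmr)) * Matrix.fromBlocks (-Al) 0 0 Ar) *ᵥ v)
      = lml * cml ^ 2 - M * lpl * cpl ^ 2 + (lpr * cpr ^ 2 - M * lmr * cmr ^ 2) := by
    rw [hblock M]
    conv_lhs => rw [hv]
    rw [fromBlocks_mulVec, sumElim_dotProduct_sumElim]
    simp only [Sum.elim_comp_inl, Sum.elim_comp_inr, zero_mulVec, add_zero, zero_add,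
      sub_mulVec, smul_mulVec, dotProduct_sub, dotProduct_smul, smul_eq_mul]
    rw [hterm πml vl eml cml hmvl heml, hterm πpl vl epl cpl hpvl hepl,
      hterm πpr vr epr cpr hpvr hepr, hterm πmr vr emr cmr hmvr hemr]
  have hvv : v ⬝ᵥ v = cpl ^ 2 + 2 * cpl * cml * (epl ⬝ᵥ eml) + cml ^ 2
      + (cpr ^ 2 + 2 * cpr * cmr * (epr ⬝ᵥ emr) + cmr ^ 2) := by
    conv_lhs => rw [hv]
    rw [sumElim_dotProduct_sumElim, hvl, hvr]
    simp only [add_dotProduct, dotProduct_add, smul_dotProduct, dotProduct_smul,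
      smul_eq_mul, hepl, heml, hepr, hemr, dotProduct_comm eml epl, dotProduct_comm emr epr]
    ring
  have hCSl : (epl ⬝ᵥ eml) ^ 2 ≤ 1 := by
    have h1 := hepl; have h2 := heml
    simp only [dotProduct, Fin.sum_univ_two] at h1 h2 ⊢
    exact aux_cauchy _ _ _ _ h1 h2
  have hCSr : (epr ⬝ᵥ emr) ^ 2 ≤ 1 := by
    have h1 := hepr; have h2 := hemr
    simp only [dotProduct, Fin.sum_univ_two] at h1 h2 ⊢
    exact aux_cauchy _ _ _ _ h1 h2
  have hsum : Sum.elim vl vr = cpl • Sum.elim epl (fun _ => (0:ℝ))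
      + cml • Sum.elim eml (fun _ => (0:ℝ)) + cpr • Sum.elim (fun _ => (0:ℝ)) epr
      + cmr • Sum.elim (fun _ => (0:ℝ)) emr := by
    funext x; cases x <;> simp [hvl, hvr]
  have hNv : N *ᵥ v = cpl • npl + cml • nml + cpr • npr + cmr • nmr := by
    conv_lhs => rw [hv, hsum]
    simp only [mulVec_add, mulVec_smul]
    rfl
  set wv : Fin 2 → ℝ := fun i => (N *ᵥ v) i - cpl * npl i - cmr * nmr i with hwvdef
  have hLw : L *ᵥ ![cml, cpr] = wv := by
    have hcol : L *ᵥ ![cml, cpr] = cml • nml + cpr • npr := by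
      funext i
      fin_cases i <;> simp [hLdef, Matrix.mulVec, dotProduct, Fin.sum_univ_two] <;> ring
    rw [hcol]
    funext i
    simp only [hwvdef, hNv, Pi.add_apply, Pi.smul_apply, smul_eq_mul]
    ring
  have hrec : ![cml, cpr] = K *ᵥ wv := by
    rw [← hLw, mulVec_mulVec, hKL, one_mulVec]
  have hcml : cml = K 0 0 * wv 0 + K 0 1 * wv 1 := by
    have := congrFun hrec 0
    simpa [Matrix.mulVec, dotProduct, Fin.sum_univ_two] using this
  have hcpr : cpr = K 1 0 * wv 0 + K 1 1 * wv 1 := by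
    have := congrFun hrec 1
    simpa [Matrix.mulVec, dotProduct, Fin.sum_univ_two] using this
  have hIc : cml ^ 2 + cpr ^ 2 ≤ CK * (wv 0 ^ 2 + wv 1 ^ 2) := by
    have hf := aux_frob (K 0 0) (K 0 1) (K 1 0) (K 1 1) (wv 0) (wv 1)
    rw [← hcml, ← hcpr] at hf
    rw [hCKdef]
    exact hf
  have hw0 : wv 0 = (N *ᵥ v) 0 - cpl * npl 0 - cmr * nmr 0 := rfl
  have hw1 : wv 1 = (N *ᵥ v) 1 - cpl * npl 1 - cmr * nmr 1 := rfl
  have hIw : wv 0 ^ 2 + wv 1 ^ 2 ≤ 3 * ((N *ᵥ v) 0 ^ 2 + (N *ᵥ v) 1 ^ 2)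
      + 3 * Epl * cpl ^ 2 + 3 * Emr * cmr ^ 2 := by
    rw [hw0, hw1, hEpldef, hEmrdef]
    have t0 := aux_three ((N *ᵥ v) 0) (cpl * npl 0) (cmr * nmr 0)
    have t1 := aux_three ((N *ᵥ v) 1) (cpl * npl 1) (cmr * nmr 1)
    linarith only [t0, t1]
  have h2 : cml ^ 2 + cpr ^ 2 ≤ 3 * CK * ((N *ᵥ v) 0 ^ 2 + (N *ᵥ v) 1 ^ 2)
      + 3 * CK * Epl * cpl ^ 2 + 3 * CK * Emr * cmr ^ 2 := by
    calc cml ^ 2 + cpr ^ 2 ≤ CK * (wv 0 ^ 2 + wv 1 ^ 2) := hIc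
      _ ≤ CK * (3 * ((N *ᵥ v) 0 ^ 2 + (N *ᵥ v) 1 ^ 2) + 3 * Epl * cpl ^ 2
            + 3 * Emr * cmr ^ 2) := mul_le_mul_of_nonneg_left hIw hCK
      _ = _ := by ring
  have hnv2 : (N *ᵥ v) ⬝ᵥ (N *ᵥ v) = (N *ᵥ v) 0 ^ 2 + (N *ᵥ v) 1 ^ 2 := by
    simp [dotProduct, Fin.sum_univ_two]; ring
  rw [hq, hvv, hnv2]
  exact aux_final lml lpr lpl lmr M m K0 CK Epl Emr cml cpr cpl cmr
    (epl ⬝ᵥ eml) (epr ⬝ᵥ emr) ((N *ᵥ v) 0) ((N *ᵥ v) 1)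
    hCK hEpl hEmr hK0 hlmlK0 hlprK0 hmlpl hmlmr hM0 hMm h2
    (aux_cs2 cpl cml _ hCSl) (aux_cs2 cpr cmr _ hCSr)
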